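/- Let c ≥ 1 and 0 ≤ a ≤ c−1 be integers, and define ε_{a,k} ∈ ℚ(q) for 1 ≤ k ≤ c+1 by ε_{a,1} := 1 and ε_{a,k+1} := q^(−c+1+2a)·ε_{a,k} + (−1)^k·qbinom(c,k). Then: (i) for every 1 ≤ k ≤ c, ε_{a,k} = (−1)^(k−1)·Σ_{j=0}^{a} q^(−(c+1)j+(k−1)(a+1))·qbinom(a,j)·qbinom(c−1−a, k−1−j); (ii) for every 1 ≤ k ≤ c+1, ε_{a,k} = σ(ε_{c−1−a,k}), where σ is the ℚ-algebra automorphism of ℚ(q) determined by σ(q) = q^(−1); (iii) ε_{a,c+1} = 0. -/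

import Mathlib

open scoped BigOperators

/-- The generator `q` of the field of rational functions `ℚ(q)`. -/
noncomputable def q : RatFunc ℚ := RatFunc.X

/-- The balanced quantum integer `[a] = (q^a - q^(-a))/(q - q⁻¹)`. -/
noncomputable def qint (a : ℤ) : RatFunc ℚ := (q ^ a - q ^ (-a)) / (q - q⁻¹)

/-- The quantum factorial `[k]! = [1][2]⋯[k]`. -/
noncomputable def qfact (k : ℕ) : RatFunc ℚ := ∏ i ∈ Finset.range k, qint ((i : ℤ) + 1)

/-- The balanced quantum binomial `qbinom a b = [a][a-1]⋯[a-b+1]/[b]!` for `b ≥ 0`,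
and `0` for `b < 0`. -/
noncomputable def qbinom (a b : ℤ) : RatFunc ℚ :=
  if b < 0 then 0
  else (∏ i ∈ Finset.range b.toNat, qint (a - (i : ℤ))) / qfact b.toNat

/-- The sequence `ε_{a,k}` (depending on `c`), defined by `ε_{a,1} = 1` and, for `k ≥ 1`,
`ε_{a,k+1} = q^(−c+1+2a)·ε_{a,k} + (−1)^k·qbinom(c,k)`. -/
noncomputable def eps (c a : ℕ) : ℕ → RatFunc ℚ
  | 0 => 1
  | 1 => 1
  | (k + 2) =>
      q ^ (-(c : ℤ) + 1 + 2 * (a : ℤ)) * eps c a (k + 1) +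
        (-1 : RatFunc ℚ) ^ (k + 1) * qbinom (c : ℤ) ((k : ℤ) + 1)

lemma q_ne_zero : q ≠ 0 := RatFunc.X_ne_zero

lemma q_pow_ne_one {n : ℕ} (hn : n ≠ 0) : q ^ n ≠ 1 := by
  intro h
  have h2 : algebraMap (Polynomial ℚ) (RatFunc ℚ) (Polynomial.X ^ n) =
      algebraMap (Polynomial ℚ) (RatFunc ℚ) 1 := by
    simpa [map_pow, RatFunc.algebraMap_X, q] using h
  have := RatFunc.algebraMap_injective ℚ h2
  have hd := congrArg Polynomial.natDegree this
  simp [Polynomial.natDegree_X_pow] at hd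
  exact hn hd

lemma q_zpow_eq_one {n : ℤ} (h : q ^ n = 1) : n = 0 := by
  rcases n with m | m
  · simp only [Int.ofNat_eq_coe, zpow_natCast] at h
    by_contra hn
    exact q_pow_ne_one (by simpa using hn) h
  · exfalso
    rw [zpow_negSucc, inv_eq_one] at h
    exact q_pow_ne_one (Nat.succ_ne_zero m) h

lemma q_zpow_inj {m n : ℤ} (h : q ^ m = q ^ n) : m = n := by
  have : q ^ (m - n) = 1 := by
    rw [zpow_sub₀ q_ne_zero, h, div_self (zpow_ne_zero _ q_ne_zero)]
  have := q_zpow_eq_one this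
  omega

lemma qd_ne_zero : q - q⁻¹ ≠ 0 := by
  rw [sub_ne_zero]
  intro h
  have : q ^ (1 : ℤ) = q ^ (-1 : ℤ) := by
    simpa [zpow_one, zpow_neg] using h
  have := q_zpow_inj this
  omega

lemma qint_zero : qint 0 = 0 := by simp [qint]

lemma qint_ne_zero {n : ℤ} (hn : n ≠ 0) : qint n ≠ 0 := by
  apply div_ne_zero _ qd_ne_zero
  rw [sub_ne_zero]
  intro h
  have := q_zpow_inj h
  omega

lemma qfact_ne_zero (k : ℕ) : qfact k ≠ 0 := by
  rw [qfact, Finset.prod_ne_zero_iff]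
  intro i _
  exact qint_ne_zero (by omega)

lemma qbinom_zero_right (n : ℤ) : qbinom n 0 = 1 := by
  simp [qbinom, qfact]

lemma qbinom_neg {n b : ℤ} (h : b < 0) : qbinom n b = 0 := by simp [qbinom, h]

lemma qbinom_eq_zero {n m : ℤ} (hn : 0 ≤ n) (h : n < m) : qbinom n m = 0 := by
  rw [qbinom, if_neg (by omega)]
  rw [Finset.prod_eq_zero (i := n.toNat) (Finset.mem_range.mpr (by omega)), zero_div]
  rw [Int.toNat_of_nonneg hn, sub_self]
  exact qint_zero

lemma qbinom_self (n : ℕ) : qbinom n n = 1 := by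
  rw [qbinom, if_neg (by omega)]
  have ht : ((n : ℤ)).toNat = n := by omega
  rw [ht]
  have : ∏ i ∈ Finset.range n, qint ((n : ℤ) - (i : ℤ)) = qfact n := by
    rw [qfact, ← Finset.prod_range_reflect]
    apply Finset.prod_congr rfl
    intro j hj
    rw [Finset.mem_range] at hj
    congr 1
    omega
  rw [this, div_self (qfact_ne_zero n)]

lemma qint_rec_B (n m : ℤ) : qint n = q ^ (-m) * qint (n - m) + q ^ (n - m) * qint m := by
  unfold qint
  rw [mul_div_assoc', mul_div_assoc', ← add_div]
  congr 1
  have h0 := q_ne_zero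
  simp only [mul_sub, ← zpow_add₀ h0]
  rw [show -m + (n - m) = n - 2 * m by ring, show -m + -(n - m) = -n by ring,
    show n - m + m = n by ring, show n - m + -m = n - 2 * m by ring]
  ring

lemma qfact_succ (m : ℕ) : qfact (m+1) = qfact m * qint ((m:ℤ)+1) := by
  rw [qfact, qfact, Finset.prod_range_succ]

lemma qbinom_pascal (n : ℤ) (m : ℕ) :
    qbinom n m = q ^ (-(m:ℤ)) * qbinom (n-1) m + q ^ (n - m) * qbinom (n-1) ((m:ℤ)-1) := by
  cases m with
  | zero =>
    simp only [Nat.cast_zero, neg_zero, zpow_zero, one_mul, sub_zero]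
    rw [qbinom_zero_right, qbinom_zero_right, qbinom_neg (show (0:ℤ)-1 < 0 by omega)]
    simp
  | succ m =>
    set P : RatFunc ℚ := ∏ i ∈ Finset.range m, qint (n - 1 - (i:ℤ)) with hP
    have ht1 : (((m+1:ℕ):ℤ)).toNat = m + 1 := by omega
    have e1 : qbinom n ((m+1:ℕ):ℤ) = (P * qint n) / (qfact m * qint ((m:ℤ)+1)) := by
      rw [qbinom, if_neg (by omega), ht1, ← qfact_succ]
      congr 1
      rw [Finset.prod_range_succ']
      congr 1
      · apply Finset.prod_congr rfl
        intro i _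
        congr 1
        push_cast
        ring
      · simp
    have e2 : qbinom (n-1) ((m+1:ℕ):ℤ) = (P * qint (n - 1 - m)) / (qfact m * qint ((m:ℤ)+1)) := by
      rw [qbinom, if_neg (by omega), ht1, ← qfact_succ]
      congr 1
      rw [Finset.prod_range_succ]
    have e3 : qbinom (n-1) (((m+1:ℕ):ℤ)-1) = P / qfact m := by
      rw [qbinom, if_neg (by omega), show (((m+1:ℕ):ℤ)-1).toNat = m by omega]
    rw [e1, e2, e3, qint_rec_B n ((m:ℤ)+1)]
    have hF := qfact_ne_zero m
    have hQ : qint ((m:ℤ)+1) ≠ 0 := qint_ne_zero (by omega)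
    have hcast : ((m+1:ℕ):ℤ) = (m:ℤ)+1 := by push_cast; ring
    rw [hcast, show n - ((m:ℤ)+1) = n - 1 - m by ring]
    field_simp

lemma zpow_shuffle (e1 e2 f1 f2 : ℤ) (A B : RatFunc ℚ) (h : e1 + e2 = f1 + f2) :
    q ^ e1 * A * (q ^ e2 * B) = q ^ f1 * (q ^ f2 * A * B) := by
  have h0 := q_ne_zero
  rw [show q ^ e1 * A * (q ^ e2 * B) = q ^ (e1 + e2) * (A * B) by rw [zpow_add₀ h0]; ring,
    show q ^ f1 * (q ^ f2 * A * B) = q ^ (f1 + f2) * (A * B) by rw [zpow_add₀ h0]; ring, h]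

lemma qvandermonde (m n k : ℕ) :
    qbinom ((m:ℤ) + n) k = ∑ j ∈ Finset.range (k+1),
      q ^ ((m:ℤ) * ((k:ℤ) - j) - (n:ℤ) * j) * qbinom m j * qbinom n ((k:ℤ) - j) := by
  induction n generalizing k with
  | zero =>
    rw [Finset.sum_eq_single k]
    · simp [qbinom_zero_right]
    · intro j hj hne
      rw [Finset.mem_range] at hj
      rw [qbinom_eq_zero (n := ((0:ℕ):ℤ)) (by simp) (by push_cast; omega), mul_zero]
    · intro h
      exact (h (Finset.self_mem_range_succ k)).elim
  | succ n ih =>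
    cases k with
    | zero => simp [qbinom_zero_right]
    | succ k =>
      have h0 := q_ne_zero
      have hsplit : ∀ j ∈ Finset.range (k+2),
          q ^ ((m:ℤ) * (((k+1:ℕ):ℤ) - j) - ((n+1:ℕ):ℤ) * j) * qbinom m j *
              qbinom ((n+1:ℕ):ℤ) (((k+1:ℕ):ℤ) - j)
          = q ^ (-((k:ℤ)+1)) * (q ^ ((m:ℤ) * (((k+1:ℕ):ℤ) - j) - (n:ℤ) * j) * qbinom m j *
                qbinom n (((k+1:ℕ):ℤ) - j))
            + q ^ ((m:ℤ) + n + 1 - ((k:ℤ)+1)) * (q ^ ((m:ℤ) * ((k:ℤ) - j) - (n:ℤ) * j) *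
                qbinom m j * qbinom n ((k:ℤ) - j)) := by
        intro j hj
        rw [Finset.mem_range] at hj
        have hKj : ((k+1-j : ℕ) : ℤ) = ((k+1:ℕ):ℤ) - j := by push_cast; omega
        rw [show (((k+1:ℕ):ℤ) - (j:ℤ)) = ((k+1-j:ℕ):ℤ) from hKj.symm,
          qbinom_pascal ((n+1:ℕ):ℤ) (k+1-j), hKj]
        rw [show ((n+1:ℕ):ℤ) - 1 = (n:ℤ) by push_cast; ring,
          show (((k+1:ℕ):ℤ) - j) - 1 = (k:ℤ) - j by push_cast; ring]
        rw [mul_add]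
        congr 1
        · exact zpow_shuffle _ _ _ _ _ _ (by push_cast; ring)
        · exact zpow_shuffle _ _ _ _ _ _ (by push_cast; ring)
      rw [Finset.sum_congr rfl hsplit, Finset.sum_add_distrib, ← Finset.mul_sum, ← Finset.mul_sum,
        ← ih (k+1), Finset.sum_range_succ,
        qbinom_neg (show (k:ℤ) - ((k+1:ℕ):ℤ) < 0 by push_cast; omega), mul_zero, add_zero,
        ← ih k,
        show ((m:ℤ) + ((n+1:ℕ):ℤ)) = ((m:ℤ) + (n:ℤ) + 1) by push_cast; ring,
        qbinom_pascal ((m:ℤ) + (n:ℤ) + 1) (k+1),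
        show ((m:ℤ) + (n:ℤ) + 1 - 1) = ((m:ℤ) + (n:ℤ)) by ring,
        show (((k+1:ℕ):ℤ) - 1) = (k:ℤ) by push_cast; ring,
        show (-((k+1:ℕ):ℤ)) = (-((k:ℤ)+1)) by push_cast; ring,
        show ((m:ℤ) + (n:ℤ) + 1 - ((k+1:ℕ):ℤ)) = ((m:ℤ) + (n:ℤ) + 1 - ((k:ℤ)+1)) by push_cast; ring]

lemma shuffle2 (e1 e2 f : ℤ) (A B : RatFunc ℚ) (h : e1 + e2 = f) :
    q ^ e1 * (q ^ e2 * A) * B = q ^ f * A * B := by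
  rw [← mul_assoc, ← zpow_add₀ q_ne_zero, h]

lemma shuffle3 (e1 e2 f : ℤ) (A B : RatFunc ℚ) (h : e1 + e2 = f) :
    q ^ e1 * (q ^ e2 * A * B) = q ^ f * A * B := by
  rw [← mul_assoc, ← mul_assoc, ← zpow_add₀ q_ne_zero, h]

lemma shuffle4 (e e1 e2 f1 f2 : ℤ) (A1 A2 B : RatFunc ℚ) (h1 : e + e1 = f1) (h2 : e + e2 = f2) :
    q ^ f1 * A1 * B + q ^ f2 * A2 * B = q ^ e * (q ^ e1 * A1 + q ^ e2 * A2) * B := by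
  rw [← h1, ← h2, zpow_add₀ q_ne_zero, zpow_add₀ q_ne_zero]
  ring

lemma qkey (c a k : ℕ) (ha : a + 1 ≤ c) :
    (∑ j ∈ Finset.range (a+1), q ^ (-((c:ℤ)+1) * (j:ℤ) + ((k:ℤ)+1) * ((a:ℤ)+1)) *
        qbinom (a:ℤ) (j:ℤ) * qbinom ((c:ℤ)-1-(a:ℤ)) (((k:ℤ)+1) - (j:ℤ)))
    + q ^ (-(c:ℤ)+1+2*(a:ℤ)) * (∑ j ∈ Finset.range (a+1),
        q ^ (-((c:ℤ)+1) * (j:ℤ) + (k:ℤ) * ((a:ℤ)+1)) * qbinom (a:ℤ) (j:ℤ) *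
          qbinom ((c:ℤ)-1-(a:ℤ)) ((k:ℤ) - (j:ℤ)))
    = qbinom (c:ℤ) ((k:ℤ)+1) := by
  have h0 := q_ne_zero
  set n := c - 1 - a with hn
  have hnc : (n:ℤ) = (c:ℤ) - 1 - (a:ℤ) := by omega
  -- step 1: distribute the factor into the second sum and reshape each term
  rw [Finset.mul_sum]
  have e2 : ∀ j ∈ Finset.range (a+1),
      q ^ (-(c:ℤ)+1+2*(a:ℤ)) * (q ^ (-((c:ℤ)+1) * (j:ℤ) + (k:ℤ) * ((a:ℤ)+1)) *
        qbinom (a:ℤ) (j:ℤ) * qbinom ((c:ℤ)-1-(a:ℤ)) ((k:ℤ) - (j:ℤ)))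
      = q ^ (-((c:ℤ)+1) * ((j+1:ℕ):ℤ) + ((k:ℤ)+1) * ((a:ℤ)+1) + ((a:ℤ)+1)) *
          qbinom (a:ℤ) (((j+1:ℕ):ℤ) - 1) * qbinom ((c:ℤ)-1-(a:ℤ)) (((k:ℤ)+1) - ((j+1:ℕ):ℤ)) := by
    intro j hj
    rw [show ((j+1:ℕ):ℤ) - 1 = (j:ℤ) by push_cast; ring,
      show ((k:ℤ)+1) - ((j+1:ℕ):ℤ) = (k:ℤ) - (j:ℤ) by push_cast; ring]
    exact shuffle3 _ _ _ _ _ (by push_cast; ring)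
  rw [Finset.sum_congr rfl e2]
  have hs2 : (∑ j ∈ Finset.range (a+1),
      q ^ (-((c:ℤ)+1) * ((j+1:ℕ):ℤ) + ((k:ℤ)+1) * ((a:ℤ)+1) + ((a:ℤ)+1)) *
        qbinom (a:ℤ) (((j+1:ℕ):ℤ) - 1) * qbinom ((c:ℤ)-1-(a:ℤ)) (((k:ℤ)+1) - ((j+1:ℕ):ℤ)))
      = ∑ j ∈ Finset.range (a+2),
      q ^ (-((c:ℤ)+1) * ((j:ℕ):ℤ) + ((k:ℤ)+1) * ((a:ℤ)+1) + ((a:ℤ)+1)) *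
        qbinom (a:ℤ) (((j:ℕ):ℤ) - 1) * qbinom ((c:ℤ)-1-(a:ℤ)) (((k:ℤ)+1) - ((j:ℕ):ℤ)) := by
    conv_rhs => rw [Finset.sum_range_succ']
    rw [qbinom_neg (show ((0:ℕ):ℤ) - 1 < 0 by simp), mul_zero, zero_mul, add_zero]
  rw [hs2]
  have hs1 : (∑ j ∈ Finset.range (a+1), q ^ (-((c:ℤ)+1) * (j:ℤ) + ((k:ℤ)+1) * ((a:ℤ)+1)) *
        qbinom (a:ℤ) (j:ℤ) * qbinom ((c:ℤ)-1-(a:ℤ)) (((k:ℤ)+1) - (j:ℤ)))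
      = ∑ j ∈ Finset.range (a+2), q ^ (-((c:ℤ)+1) * (j:ℤ) + ((k:ℤ)+1) * ((a:ℤ)+1)) *
        qbinom (a:ℤ) (j:ℤ) * qbinom ((c:ℤ)-1-(a:ℤ)) (((k:ℤ)+1) - (j:ℤ)) := by
    conv_rhs => rw [Finset.sum_range_succ]
    rw [qbinom_eq_zero (show (0:ℤ) ≤ (a:ℤ) by positivity) (show (a:ℤ) < ((a+1:ℕ):ℤ) by push_cast; omega),
      mul_zero, zero_mul, add_zero]
  rw [hs1, ← Finset.sum_add_distrib]
  -- termwise Pascal combination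
  have hterm : ∀ j ∈ Finset.range (a+2),
      (q ^ (-((c:ℤ)+1) * (j:ℤ) + ((k:ℤ)+1) * ((a:ℤ)+1)) *
        qbinom (a:ℤ) (j:ℤ) * qbinom ((c:ℤ)-1-(a:ℤ)) (((k:ℤ)+1) - (j:ℤ))
      + q ^ (-((c:ℤ)+1) * (j:ℤ) + ((k:ℤ)+1) * ((a:ℤ)+1) + ((a:ℤ)+1)) *
        qbinom (a:ℤ) ((j:ℤ) - 1) * qbinom ((c:ℤ)-1-(a:ℤ)) (((k:ℤ)+1) - (j:ℤ)))
      = q ^ (((a+1:ℕ):ℤ) * (((k+1:ℕ):ℤ) - (j:ℤ)) - (n:ℤ) * (j:ℤ)) *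
          qbinom ((a+1:ℕ):ℤ) (j:ℤ) * qbinom (n:ℤ) (((k+1:ℕ):ℤ) - (j:ℤ)) := by
    intro j hj
    rw [qbinom_pascal ((a+1:ℕ):ℤ) j, show ((a+1:ℕ):ℤ) - 1 = (a:ℤ) by push_cast; ring, hnc,
      show (((k+1:ℕ):ℤ) - (j:ℤ)) = ((k:ℤ)+1) - (j:ℤ) by push_cast; ring]
    exact shuffle4 _ _ _ _ _ _ _ _ (by push_cast; ring) (by push_cast; ring)
  rw [Finset.sum_congr rfl hterm]
  -- the Vandermonde identity
  have hv : qbinom (c:ℤ) ((k:ℤ)+1) = ∑ j ∈ Finset.range (k+2),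
      q ^ (((a+1:ℕ):ℤ) * (((k+1:ℕ):ℤ) - (j:ℤ)) - (n:ℤ) * (j:ℤ)) *
        qbinom ((a+1:ℕ):ℤ) (j:ℤ) * qbinom (n:ℤ) (((k+1:ℕ):ℤ) - (j:ℤ)) := by
    have h := qvandermonde (a+1) n (k+1)
    rw [show ((a+1:ℕ):ℤ) + (n:ℤ) = (c:ℤ) by omega,
      show ((k+1:ℕ):ℤ) = (k:ℤ)+1 by push_cast; ring] at h
    exact h
  rw [hv]
  -- extend both sums to a common range
  have hz1 : ∀ j ∈ Finset.range (a+k+4), j ∉ Finset.range (a+2) →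
      q ^ (((a+1:ℕ):ℤ) * (((k+1:ℕ):ℤ) - (j:ℤ)) - (n:ℤ) * (j:ℤ)) *
        qbinom ((a+1:ℕ):ℤ) (j:ℤ) * qbinom (n:ℤ) (((k+1:ℕ):ℤ) - (j:ℤ)) = 0 := by
    intro j _ hj
    rw [Finset.mem_range] at hj
    rw [qbinom_eq_zero (show (0:ℤ) ≤ ((a+1:ℕ):ℤ) by positivity)
      (show ((a+1:ℕ):ℤ) < (j:ℤ) by push_cast; omega), mul_zero, zero_mul]
  have hz2 : ∀ j ∈ Finset.range (a+k+4), j ∉ Finset.range (k+2) →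
      q ^ (((a+1:ℕ):ℤ) * (((k+1:ℕ):ℤ) - (j:ℤ)) - (n:ℤ) * (j:ℤ)) *
        qbinom ((a+1:ℕ):ℤ) (j:ℤ) * qbinom (n:ℤ) (((k+1:ℕ):ℤ) - (j:ℤ)) = 0 := by
    intro j _ hj
    rw [Finset.mem_range] at hj
    rw [qbinom_neg (show ((k+1:ℕ):ℤ) - (j:ℤ) < 0 by push_cast; omega), mul_zero]
  rw [Finset.sum_subset (Finset.range_subset_range.mpr (by omega : a+2 ≤ a+k+4)) hz1,
    Finset.sum_subset (Finset.range_subset_range.mpr (by omega : k+2 ≤ a+k+4)) hz2]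

lemma eps_formula (c a : ℕ) (ha : a + 1 ≤ c) (k : ℕ) :
    eps c a (k+1) = (-1 : RatFunc ℚ)^k * ∑ j ∈ Finset.range (a+1),
      q ^ (-((c:ℤ)+1) * (j:ℤ) + (k:ℤ) * ((a:ℤ)+1)) * qbinom (a:ℤ) (j:ℤ) *
        qbinom ((c:ℤ)-1-(a:ℤ)) ((k:ℤ) - (j:ℤ)) := by
  induction k with
  | zero =>
    rw [show eps c a 1 = 1 from rfl, Finset.sum_eq_single 0]
    · simp [qbinom_zero_right]
    · intro j hj hne
      rw [qbinom_neg (show ((0:ℕ):ℤ) - (j:ℤ) < 0 by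
          rw [Finset.mem_range] at hj; push_cast; omega), mul_zero]
    · intro h
      exact (h (Finset.mem_range.mpr (by omega))).elim
  | succ k ih =>
    push_cast
    rw [show eps c a (k+1+1) = q ^ (-(c : ℤ) + 1 + 2 * (a : ℤ)) * eps c a (k + 1) +
        (-1 : RatFunc ℚ) ^ (k + 1) * qbinom (c : ℤ) ((k : ℤ) + 1) from rfl,
      ih, ← qkey c a k ha]
    ring

lemma qint_bar (σ : RatFunc ℚ ≃ₐ[ℚ] RatFunc ℚ) (hσ : σ q = q⁻¹) (n : ℤ) :
    σ (qint n) = qint n := by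
  simp only [qint]
  rw [map_div₀, map_sub, map_zpow₀, map_zpow₀, map_sub, map_inv₀, hσ, inv_inv,
    inv_zpow, ← zpow_neg, inv_zpow, ← zpow_neg, neg_neg,
    show q ^ (-n) - q ^ n = -(q ^ n - q ^ (-n)) by ring,
    show q⁻¹ - q = -(q - q⁻¹) by ring, neg_div_neg_eq]

lemma qbinom_bar (σ : RatFunc ℚ ≃ₐ[ℚ] RatFunc ℚ) (hσ : σ q = q⁻¹) (n b : ℤ) :
    σ (qbinom n b) = qbinom n b := by
  simp only [qbinom, qfact]
  split_ifs with h
  · simp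
  · rw [map_div₀, map_prod, map_prod]
    congr 1
    · exact Finset.prod_congr rfl fun i _ => qint_bar σ hσ _
    · exact Finset.prod_congr rfl fun i _ => qint_bar σ hσ _

lemma eps_bar (c a : ℕ) (ha : a + 1 ≤ c) (σ : RatFunc ℚ ≃ₐ[ℚ] RatFunc ℚ) (hσ : σ q = q⁻¹)
    (k : ℕ) : eps c a k = σ (eps c (c - 1 - a) k) := by
  induction k with
  | zero => exact (map_one σ).symm
  | succ k ih =>
    cases k with
    | zero => exact (map_one σ).symm
    | succ k =>
      rw [show eps c (c-1-a) (k+1+1) = q ^ (-(c : ℤ) + 1 + 2 * ((c-1-a : ℕ) : ℤ)) *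
          eps c (c-1-a) (k + 1) + (-1 : RatFunc ℚ) ^ (k + 1) * qbinom (c : ℤ) ((k : ℤ) + 1)
          from rfl,
        show eps c a (k+1+1) = q ^ (-(c : ℤ) + 1 + 2 * (a : ℤ)) * eps c a (k + 1) +
          (-1 : RatFunc ℚ) ^ (k + 1) * qbinom (c : ℤ) ((k : ℤ) + 1) from rfl,
        map_add, map_mul, map_mul, map_zpow₀, hσ, qbinom_bar σ hσ, map_pow, map_neg, map_one,
        ← ih, inv_zpow, ← zpow_neg,
        show -(-(c : ℤ) + 1 + 2 * ((c-1-a : ℕ) : ℤ)) = -(c : ℤ) + 1 + 2 * (a : ℤ) by omega]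

/-- Lemma 4.5 of the paper: the closed formula for `ε_{a,k}` for `1 ≤ k ≤ c`,
the bar-symmetry `ε_{a,k} = σ(ε_{c−1−a,k})` where `σ(q) = q⁻¹`, and the vanishing
`ε_{a,c+1} = 0`. -/
theorem eps_properties (c a : ℕ) (hc : 1 ≤ c) (ha : a + 1 ≤ c) :
    (∀ k : ℕ, 1 ≤ k → k ≤ c →
      eps c a k = (-1 : RatFunc ℚ) ^ (k - 1) *
        ∑ j ∈ Finset.range (a + 1),
          q ^ (-((c : ℤ) + 1) * (j : ℤ) + ((k : ℤ) - 1) * ((a : ℤ) + 1)) *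
            qbinom (a : ℤ) (j : ℤ) * qbinom ((c : ℤ) - 1 - (a : ℤ)) ((k : ℤ) - 1 - (j : ℤ))) ∧
    (∀ k : ℕ, 1 ≤ k → k ≤ c + 1 →
      ∀ σ : RatFunc ℚ ≃ₐ[ℚ] RatFunc ℚ, σ q = q⁻¹ →
        eps c a k = σ (eps c (c - 1 - a) k)) ∧
    eps c a (c + 1) = 0 := by
  refine ⟨?_, fun k _ _ σ hσ => eps_bar c a ha σ hσ k, ?_⟩
  · intro k hk1 hkc
    obtain ⟨k', rfl⟩ : ∃ k', k = k' + 1 := ⟨k - 1, by omega⟩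
    push_cast
    simp only [Nat.add_sub_cancel, add_sub_cancel_right]
    exact eps_formula c a ha k'
  · rw [eps_formula c a ha c, Finset.sum_eq_zero, mul_zero]
    intro j hj
    rw [Finset.mem_range] at hj
    rw [qbinom_eq_zero (show (0:ℤ) ≤ (c:ℤ)-1-(a:ℤ) by omega)
      (show (c:ℤ)-1-(a:ℤ) < (c:ℤ)-(j:ℤ) by omega), mul_zero]
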